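/- Let 1 ≤ L ≤ M, let μ_1, ..., μ_L be pairwise distinct real numbers and t_1, ..., t_M be pairwise distinct real numbers. Then the L × M real matrix J with entries J(i, j) = exp(−μ_i · t_j) has rank L, i.e., its rows are linearly independent (equivalently, its columns span ℝ^L). -/

import Mathlib

set_option autoImplicit false

open Real Set

/-- An exponential sum with `n` distinct frequencies vanishing at `n` increasing points
has all coefficients zero. -/
lemma exp_sum_zeros (n : ℕ) : ∀ (μ c x : Fin n → ℝ), Function.Injective μ → StrictMono x →
    (∀ k, ∑ i, c i * Real.exp (μ i * x k) = 0) → c = 0 := by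
  induction n with
  | zero => intro μ c x _ _ _; funext i; exact i.elim0
  | succ n ih =>
    intro μ c x hμ hx hz
    -- the function g y = ∑ i, c i * exp ((μ i - μ 0) * y) vanishes at all x k
    have hg0 : ∀ k, ∑ i, c i * Real.exp ((μ i - μ 0) * x k) = 0 := by
      intro k
      have : ∑ i, c i * Real.exp ((μ i - μ 0) * x k)
          = Real.exp (-(μ 0 * x k)) * ∑ i, c i * Real.exp (μ i * x k) := by
        rw [Finset.mul_sum]
        refine Finset.sum_congr rfl fun i _ => ?_
        rw [show (μ i - μ 0) * x k = -(μ 0 * x k) + μ i * x k by ring, Real.exp_add]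
        ring
      rw [this, hz k, mul_zero]
    -- g has an explicit derivative everywhere
    have hder : ∀ y : ℝ, HasDerivAt (fun y => ∑ i, c i * Real.exp ((μ i - μ 0) * y))
        (∑ i, c i * ((μ i - μ 0) * Real.exp ((μ i - μ 0) * y))) y := by
      intro y
      refine HasDerivAt.fun_sum fun i _ => ?_
      have h1 : HasDerivAt (fun y : ℝ => (μ i - μ 0) * y) (μ i - μ 0) y := by
        simpa using (hasDerivAt_id y).const_mul (μ i - μ 0)
      have := (h1.exp).const_mul (c i)
      convert this using 1
      · rfl
      ring
    -- Rolle in each gap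
    have key : ∀ k : Fin n, ∃ ξ ∈ Set.Ioo (x k.castSucc) (x k.succ),
        ∑ i, c i * ((μ i - μ 0) * Real.exp ((μ i - μ 0) * ξ)) = 0 := by
      intro k
      refine exists_hasDerivAt_eq_zero (hx k.castSucc_lt_succ) ?_ ?_ (fun y _ => hder y)
      · exact fun y _ => (hder y).continuousAt.continuousWithinAt
      · rw [hg0, hg0]
    choose ξ hmem hzero using key
    have hξ : StrictMono ξ := by
      intro k l hkl
      have h1 : ξ k < x k.succ := (hmem k).2
      have h2 : x k.succ ≤ x l.castSucc := by
        refine hx.monotone ?_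
        rw [Fin.le_def]
        simp only [Fin.val_succ, Fin.coe_castSucc]
        exact hkl
      exact h1.trans (h2.trans_lt (hmem l).1)
    -- apply induction hypothesis to the derivative
    have hν : Function.Injective (fun i : Fin n => μ i.succ - μ 0) := by
      intro a b h
      exact Fin.succ_injective _ (hμ (by linarith [sub_left_injective.eq_iff.mp h] <;> nlinarith))
    have hd : ∀ k, ∑ i : Fin n,
        (c i.succ * (μ i.succ - μ 0)) * Real.exp ((μ i.succ - μ 0) * ξ k) = 0 := by
      intro k
      have h := hzero k
      rw [Fin.sum_univ_succ] at h
      simp only [sub_self, zero_mul, mul_zero, zero_add] at h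
      calc ∑ i : Fin n, (c i.succ * (μ i.succ - μ 0)) * Real.exp ((μ i.succ - μ 0) * ξ k)
          = ∑ i : Fin n, c i.succ * ((μ i.succ - μ 0) * Real.exp ((μ i.succ - μ 0) * ξ k)) := by
            refine Finset.sum_congr rfl fun i _ => by ring
        _ = 0 := h
    have hcz := ih (fun i => μ i.succ - μ 0) (fun i => c i.succ * (μ i.succ - μ 0)) ξ hν hξ hd
    have hsucc : ∀ i : Fin n, c i.succ = 0 := by
      intro i
      have h := congrFun hcz i
      have hne : μ i.succ - μ 0 ≠ 0 :=
        sub_ne_zero.mpr fun h => Fin.succ_ne_zero i (hμ h)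
      exact (mul_eq_zero.mp h).resolve_right hne
    have h0 : c 0 = 0 := by
      have h := hz 0
      rw [Fin.sum_univ_succ] at h
      simp only [hsucc, zero_mul, Finset.sum_const_zero, add_zero] at h
      exact (mul_eq_zero.mp h).resolve_right (Real.exp_ne_zero _)
    funext i
    refine Fin.cases ?_ ?_ i
    · exact h0
    · exact hsucc

/-- Version for injective (not necessarily increasing) points. -/
lemma exp_sum_zeros' (n : ℕ) (μ c x : Fin n → ℝ) (hμ : Function.Injective μ)
    (hx : Function.Injective x) (hz : ∀ k, ∑ i, c i * Real.exp (μ i * x k) = 0) : c = 0 := by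
  classical
  set S : Finset ℝ := Finset.image x Finset.univ with hS
  have hcard : S.card = n := by
    rw [hS, Finset.card_image_of_injective _ hx, Finset.card_univ, Fintype.card_fin]
  let e := S.orderIsoOfFin hcard
  refine exp_sum_zeros n μ c (fun k => (e k : ℝ)) hμ ?_ ?_
  · exact fun a b h => Subtype.coe_lt_coe.2 (e.strictMono h)
  · intro k
    obtain ⟨i, -, hi⟩ := Finset.mem_image.mp (e k).2
    show ∑ i, c i * Real.exp (μ i * (e k : ℝ)) = 0
    rw [← hi]
    exact hz i

/-- The `L × M` matrix `J(i,j) = exp(−μ_i · t_j)` with `1 ≤ L ≤ M`, pairwise distinct `μ_i`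
and pairwise distinct `t_j`, has full row rank `L`. -/
theorem exp_matrix_rank_eq (L M : ℕ) (hL : 1 ≤ L) (hLM : L ≤ M) (μ : Fin L → ℝ)
    (t : Fin M → ℝ) (hμ : Function.Injective μ) (ht : Function.Injective t) :
    (Matrix.of fun (i : Fin L) (j : Fin M) => Real.exp (-μ i * t j)).rank = L := by
  set A : Matrix (Fin L) (Fin M) ℝ :=
    Matrix.of fun (i : Fin L) (j : Fin M) => Real.exp (-μ i * t j) with hA
  have hrows : LinearIndependent ℝ (fun i => A i) := by
    rw [Fintype.linearIndependent_iff]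
    intro c hc
    have hz : ∀ j : Fin L, ∑ i, c i * Real.exp (-μ i * t (Fin.castLE hLM j)) = 0 := by
      intro j
      have h := congrFun hc (Fin.castLE hLM j)
      simpa [A, Finset.sum_apply] using h
    have hneg : Function.Injective (fun i => -μ i) := fun a b h =>
      hμ (neg_injective h)
    have hcomp : Function.Injective (fun j : Fin L => t (Fin.castLE hLM j)) :=
      ht.comp (Fin.castLE_injective hLM)
    have := exp_sum_zeros' L (fun i => -μ i) c (fun j => t (Fin.castLE hLM j)) hneg hcomp hz
    exact fun i => congrFun this i
  rw [← Matrix.rank_transpose, Matrix.rank_eq_finrank_span_cols, Matrix.col_def, Matrix.transpose_transpose]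
  rw [finrank_span_eq_card hrows, Fintype.card_fin]
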